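/- Let λ ≠ 0, m ≠ 1 be real constants and set c = λ(m−1) + 1. The functions u₊(x,t) = (c t + √(c t² − 2x))^{1/(1−m)} and u₋(x,t) = (c t − √(c t² − 2x))^{1/(1−m)} satisfy u_t + u^{1−m}·u_x + λ·u^m = 0 at every point (x,t) at which c t² − 2x > 0 and the respective base c t ± √(c t² − 2x) is positive. -/

import Mathlib

open Real

private lemma case3_aux (lam m : ℝ) (hm : m ≠ 1) (c : ℝ)
    (hc : c = lam * (m - 1) + 1) (ε x t : ℝ) (hε : ε ^ 2 = 1)
    (hs : 0 < c * t ^ 2 - 2 * x)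
    (hb : 0 < c * t + ε * Real.sqrt (c * t ^ 2 - 2 * x)) :
    fderiv ℝ (fun p : ℝ × ℝ => (c * p.2 + ε * Real.sqrt (c * p.2 ^ 2 - 2 * p.1)) ^ (1 / (1-m))) (x, t) (0, 1)
      + ((c * t + ε * Real.sqrt (c * t ^ 2 - 2 * x)) ^ (1 / (1-m))) ^ (1 - m)
        * fderiv ℝ (fun p : ℝ × ℝ => (c * p.2 + ε * Real.sqrt (c * p.2 ^ 2 - 2 * p.1)) ^ (1 / (1-m))) (x, t) (1, 0)
      + lam * ((c * t + ε * Real.sqrt (c * t ^ 2 - 2 * x)) ^ (1 / (1-m))) ^ m = 0 := by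
  have hsne : c * t ^ 2 - 2 * x ≠ 0 := ne_of_gt hs
  have hS : (0:ℝ) < Real.sqrt (c * t ^ 2 - 2 * x) := Real.sqrt_pos.2 hs
  have hsd : HasFDerivAt (fun p : ℝ × ℝ => c * p.2 ^ 2 - 2 * p.1)
      ((c • ((2 * t ^ 1 : ℝ) • ContinuousLinearMap.snd ℝ ℝ ℝ)) - ((2:ℝ) • ContinuousLinearMap.fst ℝ ℝ ℝ)) (x, t) := by
    have hp2 : HasFDerivAt (fun p : ℝ × ℝ => p.2 ^ 2)
        ((2 * t ^ 1 : ℝ) • ContinuousLinearMap.snd ℝ ℝ ℝ) (x, t) := by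
      have h := (hasDerivAt_pow 2 t).comp_hasFDerivAt (x, t)
        (hasFDerivAt_snd : HasFDerivAt (fun p : ℝ × ℝ => p.2) (ContinuousLinearMap.snd ℝ ℝ ℝ) (x,t))
      simpa [Function.comp_def] using h
    exact (hp2.const_mul c).sub ((hasFDerivAt_fst).const_mul 2)
  have hsq := hsd.sqrt hsne
  have hbd := ((hasFDerivAt_snd : HasFDerivAt (fun p : ℝ × ℝ => p.2) (ContinuousLinearMap.snd ℝ ℝ ℝ) (x,t)).const_mul c).add (hsq.const_mul ε)
  have hu := hbd.rpow_const (p := 1/(1-m)) (Or.inl (ne_of_gt hb))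
  rw [(show HasFDerivAt (fun p : ℝ × ℝ => (c * p.2 + ε * Real.sqrt (c * p.2 ^ 2 - 2 * p.1)) ^ (1 / (1-m))) _ (x, t) from hu).fderiv]
  simp only [ContinuousLinearMap.smul_apply, ContinuousLinearMap.add_apply,
    ContinuousLinearMap.sub_apply, ContinuousLinearMap.coe_smul', Pi.smul_apply,
    ContinuousLinearMap.coe_fst', ContinuousLinearMap.coe_snd', smul_eq_mul, Pi.add_apply]
  set S := Real.sqrt (c * t ^ 2 - 2 * x) with hSdef
  set b := c * t + ε * S with hbdef
  have hb0 : (0:ℝ) ≤ b := hb.le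
  have h1m : (1:ℝ) - m ≠ 0 := sub_ne_zero.2 (Ne.symm hm)
  have hSne : S ≠ 0 := ne_of_gt hS
  have e1 : (b ^ (1/(1-m))) ^ (1-m) = b := by
    rw [← Real.rpow_mul hb0, one_div_mul_cancel h1m, Real.rpow_one]
  have e2 : (b ^ (1/(1-m))) ^ m = b ^ (1/(1-m) - 1) := by
    rw [← Real.rpow_mul hb0]
    congr 1
    field_simp
    ring
  rw [e1, e2]
  rw [hbdef]
  subst hc
  field_simp
  ring_nf
  rw [hε]
  ring



/-- with c = λ(m−1) + 1, the functions
`u±(x,t) = (c t ± √(c t² − 2x))^{1/(1−m)}` satisfy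
`u_t + u^{1−m}·u_x + λ·u^m = 0` at every point at which `c t² − 2x > 0` and
the respective base `c t ± √(c t² − 2x)` is positive. -/
theorem case3_combined_invariant_solution
    (lam m : ℝ) (hlam : lam ≠ 0) (hm : m ≠ 1) (c : ℝ)
    (hc : c = lam * (m - 1) + 1) :
    ∀ uP uM : ℝ × ℝ → ℝ,
      uP = (fun p : ℝ × ℝ =>
        (c * p.2 + Real.sqrt (c * p.2 ^ 2 - 2 * p.1)) ^ (1 / (1 - m))) →
      uM = (fun p : ℝ × ℝ =>
        (c * p.2 - Real.sqrt (c * p.2 ^ 2 - 2 * p.1)) ^ (1 / (1 - m))) →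
      ∀ x t : ℝ, 0 < c * t ^ 2 - 2 * x →
        (0 < c * t + Real.sqrt (c * t ^ 2 - 2 * x) →
          fderiv ℝ uP (x, t) (0, 1)
            + uP (x, t) ^ (1 - m) * fderiv ℝ uP (x, t) (1, 0)
            + lam * uP (x, t) ^ m = 0) ∧
        (0 < c * t - Real.sqrt (c * t ^ 2 - 2 * x) →
          fderiv ℝ uM (x, t) (0, 1)
            + uM (x, t) ^ (1 - m) * fderiv ℝ uM (x, t) (1, 0)
            + lam * uM (x, t) ^ m = 0) := by
  intro uP uM hP hM x t hs
  subst hP hM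
  constructor
  · intro hb
    have h := case3_aux lam m hm c hc 1 x t (by norm_num) hs (by simpa using hb)
    simpa using h
  · intro hb
    have h := case3_aux lam m hm c hc (-1) x t (by norm_num) hs
      (by simpa [neg_one_mul, ← sub_eq_add_neg] using hb)
    simpa [neg_one_mul, ← sub_eq_add_neg] using h
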